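/- arXiv:2107.09684 — 4 statements merged into one kernel-verified Lean document; each statement's English description precedes it below -/
import Mathlib

section
/- In F_2[x_1,...,x_{k-1}]/(x_i^2-x_i), the polynomial p which is the indicator function of the set {0, e_1, ..., e_{k-1}} (the origin and the k-1 standard basis vectors) has degree k-2 if k is even and degree k-1 if k is odd. -/
/-- `p` represents the Boolean function `f`. -/
def Represents {m : ℕ} (p : MvPolynomial (Fin m) (ZMod 2))
    (f : (Fin m → ZMod 2) → ZMod 2) : Prop :=
  ∀ x, MvPolynomial.eval x p = f x

/-- The degree of a nonzero Boolean function: the least total degree of a polynomial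
representing it. -/
noncomputable def natBDeg {m : ℕ} (f : (Fin m → ZMod 2) → ZMod 2) : ℕ :=
  sInf {d : ℕ | ∃ p, Represents p f ∧ p.totalDegree ≤ d}

namespace Stmt10Aux

open MvPolynomial Finset

variable {m : ℕ}

lemma zmod2_sum (g : ZMod 2 → ZMod 2) : ∑ b : ZMod 2, g b = g 0 + g 1 :=
  Fin.sum_univ_two g

lemma cast_zmod2_eq_zero (n : ℕ) (h : n % 2 = 0) : (n : ZMod 2) = 0 := by
  rw [← ZMod.natCast_mod n 2, h, Nat.cast_zero]

lemma cast_zmod2_ne_zero (n : ℕ) (h : n % 2 = 1) : (n : ZMod 2) ≠ 0 := by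
  rw [← ZMod.natCast_mod n 2, h, Nat.cast_one]
  exact one_ne_zero

/-- indicator polynomial of the point `a` -/
noncomputable def ind (a : Fin m → ZMod 2) : MvPolynomial (Fin m) (ZMod 2) :=
  ∏ i, (X i + C (a i + 1))

lemma eval_ind (x a : Fin m → ZMod 2) :
    eval x (ind a) = if x = a then 1 else 0 := by
  rw [ind]
  rw [map_prod]
  simp only [map_add, eval_X, eval_C]
  by_cases h : x = a
  · subst h
    rw [if_pos rfl]
    apply Finset.prod_eq_one
    intro i _
    have : ∀ u : ZMod 2, u + (u + 1) = 1 := by decide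
    exact this _
  · rw [if_neg h]
    obtain ⟨i, hi⟩ := Function.ne_iff.mp h
    apply Finset.prod_eq_zero (mem_univ i)
    have : ∀ u v : ZMod 2, u ≠ v → u + (v + 1) = 0 := by decide
    exact this _ _ hi

/-- interpolation polynomial -/
noncomputable def interp (f : (Fin m → ZMod 2) → ZMod 2) : MvPolynomial (Fin m) (ZMod 2) :=
  ∑ a : Fin m → ZMod 2, C (f a) * ind a

lemma represents_interp (f : (Fin m → ZMod 2) → ZMod 2) : Represents (interp f) f := by
  intro x
  rw [interp, map_sum]
  simp only [map_mul, eval_C, eval_ind]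
  rw [Finset.sum_eq_single x]
  · simp
  · intro a _ ha
    rw [if_neg (Ne.symm ha), mul_zero]
  · intro h; exact absurd (mem_univ x) h

lemma td_ind_le (a : Fin m → ZMod 2) : (ind a).totalDegree ≤ m := by
  refine le_trans (totalDegree_finset_prod _ _) ?_
  calc ∑ i : Fin m, (X i + C (a i + 1)).totalDegree
      ≤ ∑ _i : Fin m, 1 := by
        refine Finset.sum_le_sum fun i _ => ?_
        refine le_trans (totalDegree_add _ _) ?_
        rw [totalDegree_X, totalDegree_C]
        simp
    _ = m := by simp

lemma td_interp_le (f : (Fin m → ZMod 2) → ZMod 2) : (interp f).totalDegree ≤ m := by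
  refine le_trans (totalDegree_finset_sum _ _) (Finset.sup_le fun a _ => ?_)
  refine le_trans (totalDegree_mul _ _) ?_
  simpa [totalDegree_C] using td_ind_le a

/-- the lower-degree remainder of `ind a` -/
noncomputable def rest (a : Fin m → ZMod 2) : MvPolynomial (Fin m) (ZMod 2) :=
  ∑ t ∈ (univ : Finset (Fin m)).powerset.erase univ,
    (∏ i ∈ t, X i) * ∏ i ∈ univ \ t, C (a i + 1)

lemma ind_decomp (a : Fin m → ZMod 2) : ind a = (∏ i, X i) + rest a := by
  rw [ind, Finset.prod_add, rest,
    ← Finset.add_sum_erase _ _ (Finset.mem_powerset_self (univ : Finset (Fin m)))]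
  simp

lemma td_rest_le (a : Fin m → ZMod 2) : (rest a).totalDegree ≤ m - 1 := by
  refine le_trans (totalDegree_finset_sum _ _) (Finset.sup_le fun t ht => ?_)
  obtain ⟨hne, hmem⟩ := Finset.mem_erase.mp ht
  have htcard : t.card ≤ m - 1 := by
    have h1 : t ⊆ univ := Finset.mem_powerset.mp hmem
    have := Finset.card_lt_card (lt_of_le_of_ne h1 hne)
    simp only [Finset.card_univ, Fintype.card_fin] at this
    omega
  refine le_trans (totalDegree_mul _ _) ?_
  have h2 : (∏ i ∈ t, (X i : MvPolynomial (Fin m) (ZMod 2))).totalDegree ≤ t.card := by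
    refine le_trans (totalDegree_finset_prod _ _) ?_
    simp [totalDegree_X]
  have h3 : (∏ i ∈ univ \ t, (C (a i + 1) : MvPolynomial (Fin m) (ZMod 2))).totalDegree ≤ 0 := by
    refine le_trans (totalDegree_finset_prod _ _) ?_
    exact (Finset.sum_eq_zero fun i _ => totalDegree_C _).le
  omega

lemma td_interp_le_sub_one (f : (Fin m → ZMod 2) → ZMod 2)
    (h : ∑ a : Fin m → ZMod 2, f a = 0) : (interp f).totalDegree ≤ m - 1 := by
  have heq : interp f = ∑ a : Fin m → ZMod 2, C (f a) * rest a := by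
    rw [interp]
    simp only [ind_decomp, mul_add]
    rw [Finset.sum_add_distrib, ← Finset.sum_mul, ← map_sum, h]
    simp
  rw [heq]
  refine le_trans (totalDegree_finset_sum _ _) (Finset.sup_le fun a _ => ?_)
  refine le_trans (totalDegree_mul _ _) ?_
  simpa [totalDegree_C] using td_rest_le a

lemma single_ne_zero' (j : Fin m) : (Pi.single j 1 : Fin m → ZMod 2) ≠ 0 := by
  intro h
  have := congrFun h j
  simp at this

lemma sum_w (S : Finset (Fin m)) (f : (Fin m → ZMod 2) → ZMod 2)
    (h1 : ∀ x, (x = 0 ∨ ∃ j, x = Pi.single j 1) → f x = 1)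
    (h2 : ∀ x, ¬(x = 0 ∨ ∃ j, x = Pi.single j 1) → f x = 0) :
    ∑ x : Fin m → ZMod 2, (∏ i ∈ Sᶜ, (x i + 1)) * f x = ((S.card + 1 : ℕ) : ZMod 2) := by
  classical
  set T : Finset (Fin m → ZMod 2) :=
    insert 0 ((univ : Finset (Fin m)).image fun j => (Pi.single j 1 : Fin m → ZMod 2)) with hT
  have hmemT : ∀ x, x ∈ T ↔ (x = 0 ∨ ∃ j, x = Pi.single j 1) := by
    intro x; simp [hT, eq_comm]
  rw [← Finset.sum_subset (Finset.subset_univ T) (fun x _ hx => by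
    rw [h2 x (fun h => hx ((hmemT x).mpr h)), mul_zero])]
  rw [Finset.sum_congr rfl (fun x hx => by rw [h1 x ((hmemT x).mp hx), mul_one])]
  have h0 : (0 : Fin m → ZMod 2) ∉
      (univ : Finset (Fin m)).image fun j => (Pi.single j 1 : Fin m → ZMod 2) := by
    simp only [Finset.mem_image, mem_univ, true_and]
    rintro ⟨j, hj⟩
    exact single_ne_zero' j hj
  rw [hT, Finset.sum_insert h0, Finset.sum_image (fun j _ j' _ h => by
    by_contra hne
    have := congrFun h j
    rw [Pi.single_eq_same, Pi.single_eq_of_ne hne] at this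
    exact one_ne_zero this)]
  have hw0 : (∏ i ∈ Sᶜ, ((0 : Fin m → ZMod 2) i + 1)) = 1 := by
    apply Finset.prod_eq_one; intro i _; simp
  have hwj : ∀ j : Fin m, (∏ i ∈ Sᶜ, ((Pi.single j 1 : Fin m → ZMod 2) i + 1))
      = if j ∈ S then 1 else 0 := by
    intro j
    by_cases hj : j ∈ S
    · rw [if_pos hj]
      apply Finset.prod_eq_one
      intro i hi
      have hne : i ≠ j := fun h => (Finset.mem_compl.mp hi) (h ▸ hj)
      rw [Pi.single_eq_of_ne hne]; simp
    · rw [if_neg hj]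
      apply Finset.prod_eq_zero (Finset.mem_compl.mpr hj)
      rw [Pi.single_eq_same]; decide
  rw [hw0, Finset.sum_congr rfl fun j _ => hwj j, Finset.sum_ite_mem, Finset.univ_inter,
    Finset.sum_const]
  push_cast
  ring

lemma lower_bound (S : Finset (Fin m)) (q : MvPolynomial (Fin m) (ZMod 2))
    (h : ∑ x : Fin m → ZMod 2, (∏ i ∈ Sᶜ, (x i + 1)) * eval x q ≠ 0) :
    S.card ≤ q.totalDegree := by
  classical
  have key : ∑ x : Fin m → ZMod 2, (∏ i ∈ Sᶜ, (x i + 1)) * eval x q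
      = ∑ d ∈ q.support, coeff d q *
          ∏ i : Fin m, (∑ b : ZMod 2, b ^ d i * (if i ∈ S then 1 else b + 1)) := by
    have hsplit : ∀ x : Fin m → ZMod 2, ∀ d : Fin m →₀ ℕ,
        (∏ i : Fin m, x i ^ d i) * (∏ i ∈ Sᶜ, (x i + 1))
          = ∏ i : Fin m, (x i ^ d i * (if i ∈ S then 1 else x i + 1)) := by
      intro x d
      rw [Finset.prod_mul_distrib]
      congr 1
      rw [← Finset.prod_compl_mul_prod S (fun i => if i ∈ S then (1 : ZMod 2) else x i + 1)]
      rw [Finset.prod_congr rfl (fun i hi => if_neg (Finset.mem_compl.mp hi)),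
        Finset.prod_congr rfl (fun i hi => if_pos hi), Finset.prod_const_one, mul_one]
    simp only [eval_eq', Finset.mul_sum]
    rw [Finset.sum_comm]
    refine Finset.sum_congr rfl fun d _ => ?_
    rw [Finset.prod_univ_sum, Fintype.piFinset_univ, Finset.mul_sum]
    refine Finset.sum_congr rfl fun x _ => ?_
    rw [mul_comm ((∏ i ∈ Sᶜ, (x i + 1))) _, mul_assoc, hsplit]
  rw [key] at h
  obtain ⟨d, hd, hne⟩ := Finset.exists_ne_zero_of_sum_ne_zero h
  have hprod : ∀ i : Fin m, (∑ b : ZMod 2, b ^ d i * (if i ∈ S then 1 else b + 1)) ≠ 0 := by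
    intro i hzero
    apply hne
    rw [Finset.prod_eq_zero (mem_univ i) hzero, mul_zero]
  have hdS : ∀ i ∈ S, 1 ≤ d i := by
    intro i hi
    by_contra hlt
    have hdi : d i = 0 := by omega
    apply hprod i
    rw [zmod2_sum]
    simp [hdi, hi]
    decide
  have hsub : S ⊆ d.support := fun i hi => Finsupp.mem_support_iff.mpr (by
    have := hdS i hi; omega)
  calc S.card = ∑ _i ∈ S, 1 := by simp
    _ ≤ ∑ i ∈ S, d i := Finset.sum_le_sum hdS
    _ ≤ ∑ i ∈ d.support, d i := Finset.sum_le_sum_of_subset hsub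
    _ = d.sum fun _ e => e := rfl
    _ ≤ q.totalDegree := le_totalDegree hd

lemma main_deg (m : ℕ) (f : (Fin m → ZMod 2) → ZMod 2)
    (h1 : ∀ x, (x = 0 ∨ ∃ j, x = Pi.single j 1) → f x = 1)
    (h2 : ∀ x, ¬(x = 0 ∨ ∃ j, x = Pi.single j 1) → f x = 0) :
    natBDeg f = if Even m then m else m - 1 := by
  classical
  set D := if Even m then m else m - 1 with hD
  -- the weighted sums of f
  have hsum : ∀ S : Finset (Fin m),
      ∑ x : Fin m → ZMod 2, (∏ i ∈ Sᶜ, (x i + 1)) * f x = ((S.card + 1 : ℕ) : ZMod 2) :=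
    fun S => sum_w S f h1 h2
  -- upper bound: D is in the defining set
  have hmem : D ∈ {d : ℕ | ∃ p, Represents p f ∧ p.totalDegree ≤ d} := by
    refine ⟨interp f, represents_interp f, ?_⟩
    by_cases hm : Even m
    · rw [hD, if_pos hm]
      exact td_interp_le f
    · rw [hD, if_neg hm]
      apply td_interp_le_sub_one
      have hs := hsum (univ : Finset (Fin m))
      rw [Finset.compl_univ] at hs
      simp only [Finset.prod_empty, one_mul] at hs
      rw [hs]
      apply cast_zmod2_eq_zero
      rw [Nat.even_iff] at hm
      simp only [Finset.card_univ, Fintype.card_fin]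
      omega
  -- lower bound
  have hlow : ∀ d ∈ {d : ℕ | ∃ p, Represents p f ∧ p.totalDegree ≤ d}, D ≤ d := by
    rintro d ⟨q, hq, hdq⟩
    have hrw : ∀ S : Finset (Fin m),
        ∑ x : Fin m → ZMod 2, (∏ i ∈ Sᶜ, (x i + 1)) * eval x q
          = ((S.card + 1 : ℕ) : ZMod 2) := by
      intro S
      rw [Finset.sum_congr rfl fun x _ => by rw [hq x], hsum S]
    by_cases hm : Even m
    · have hne : ∑ x : Fin m → ZMod 2,
          (∏ i ∈ (univ : Finset (Fin m))ᶜ, (x i + 1)) * eval x q ≠ 0 := by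
        rw [hrw]
        apply cast_zmod2_ne_zero
        rw [Nat.even_iff] at hm
        simp only [Finset.card_univ, Fintype.card_fin]
        omega
      have := lower_bound _ q hne
      rw [Finset.card_univ, Fintype.card_fin] at this
      rw [hD, if_pos hm]
      omega
    · have hm1 : 1 ≤ m := by
        rcases Nat.eq_zero_or_pos m with h | h
        · exact absurd (h ▸ (Even.zero : Even 0)) hm
        · exact h
      set i0 : Fin m := ⟨0, by omega⟩ with hi0
      have hcard : ((univ : Finset (Fin m)).erase i0).card = m - 1 := by
        rw [Finset.card_erase_of_mem (mem_univ i0), Finset.card_univ, Fintype.card_fin]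
      have hne : ∑ x : Fin m → ZMod 2,
          (∏ i ∈ ((univ : Finset (Fin m)).erase i0)ᶜ, (x i + 1)) * eval x q ≠ 0 := by
        rw [hrw]
        apply cast_zmod2_ne_zero
        rw [Nat.even_iff] at hm
        rw [hcard]
        omega
      have := lower_bound _ q hne
      rw [hcard] at this
      rw [hD, if_neg hm]
      omega
  exact le_antisymm (Nat.sInf_le hmem) (le_csInf ⟨D, hmem⟩ hlow)

end Stmt10Aux

/-- The indicator function of `{0, e_1, …, e_{k-1}} ⊆ F_2^{k-1}` has degree `k - 2`
if `k` is even and `k - 1` if `k` is odd. -/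
theorem stmt_10 (k : ℕ) (hk : 1 ≤ k) :
    natBDeg (fun x : Fin (k - 1) → ZMod 2 =>
        if x = 0 ∨ ∃ j, x = Pi.single j 1 then (1 : ZMod 2) else 0)
      = if Even k then k - 2 else k - 1 := by
  rw [Stmt10Aux.main_deg (k - 1) _ (fun x hx => if_pos hx) (fun x hx => if_neg hx)]
  have hpar : Even (k - 1) ↔ ¬ Even k := by
    rw [Nat.even_iff, Nat.even_iff]
    omega
  by_cases he : Even k
  · rw [if_neg (fun h => (hpar.mp h) he), if_pos he]
    omega
  · rw [if_pos (hpar.mpr he), if_neg he]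
end

section
/- For any Z_4-valued quadratic form q: F_2^m → Z_4 defined by a symmetric matrix M over Z_4 via q(z) = z M z^T, there exist an r×m binary matrix W and an m×m diagonal binary matrix D such that q(z) = z(W^T W)z^T + 2·(z D z^T) for all z ∈ F_2^m, with r_0 ≤ r ≤ r_0 + 1 where r_0 is the F_2-rank of M mod 2. -/
open Matrix
namespace Stmt16

noncomputable def cs {m : ℕ} (A : Matrix (Fin m) (Fin m) (ZMod 2)) :
    Submodule (ZMod 2) (Fin m → ZMod 2) :=
  LinearMap.range A.mulVecLin

lemma rank_eq_cs {m : ℕ} (A : Matrix (Fin m) (Fin m) (ZMod 2)) :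
    A.rank = Module.finrank (ZMod 2) (cs A) := rfl

lemma vmv_mulVec {m : ℕ} (u v x : Fin m → ZMod 2) :
    (vecMulVec u v) *ᵥ x = (v ⬝ᵥ x) • u := by
  ext a
  simp [vecMulVec_apply, mulVec, dotProduct, Finset.mul_sum, mul_assoc, mul_comm, mul_left_comm]

lemma row_mem_cs {m : ℕ} (A : Matrix (Fin m) (Fin m) (ZMod 2)) (hA : A.IsSymm) (i : Fin m) :
    A i ∈ cs A := by
  refine ⟨Pi.single i 1, ?_⟩
  ext a
  simp [mulVecLin_apply, mulVec_single, hA.apply]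

lemma coord_zero_of_mem {m : ℕ} {B : Matrix (Fin m) (Fin m) (ZMod 2)} {i : Fin m}
    (h : B i = 0) {x : Fin m → (ZMod 2)} (hx : x ∈ cs B) : x i = 0 := by
  obtain ⟨y, rfl⟩ := hx
  simp [mulVecLin_apply, mulVec, h]

lemma rank_step1 {m : ℕ} (A : Matrix (Fin m) (Fin m) (ZMod 2)) (hA : A.IsSymm) (i : Fin m)
    (hi : A i i = 1) :
    (A + vecMulVec (A i) (A i)).rank < A.rank := by
  set u := A i with hu
  set A' := A + vecMulVec u u with hA'
  have hrow : A' i = 0 := by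
    ext b
    simp only [hA', Matrix.add_apply, vecMulVec_apply, ← hu]
    rw [hi]
    simp [CharTwo.add_self_eq_zero]
  have hle : cs A' ≤ cs A := by
    rintro x ⟨y, rfl⟩
    have : A'.mulVecLin y = A *ᵥ y + (u ⬝ᵥ y) • u := by
      simp [hA', mulVecLin_apply, add_mulVec, vmv_mulVec]
    rw [this]
    exact Submodule.add_mem _ ⟨y, rfl⟩ (Submodule.smul_mem _ _ (row_mem_cs A hA i))
  have hlt : cs A' < cs A := by
    refine lt_of_le_of_ne hle fun h => ?_
    have := coord_zero_of_mem hrow (h ▸ row_mem_cs A hA i)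
    rw [← hu, hi] at this
    exact one_ne_zero this
  rw [rank_eq_cs, rank_eq_cs]
  exact Submodule.finrank_lt_finrank_of_lt hlt

lemma rank_step2 {m : ℕ} (A : Matrix (Fin m) (Fin m) (ZMod 2)) (hA : A.IsSymm)
    (hdiag : ∀ a, A a a = 0) (i j : Fin m) (hij : A i j = 1) :
    (A + (vecMulVec (A i) (A j) + vecMulVec (A j) (A i))).rank + 2 ≤ A.rank := by
  set u := A i with hu
  set v := A j with hv
  set A' := A + (vecMulVec u v + vecMulVec v u) with hA'
  have hui : u i = 0 := hdiag i
  have huj : u j = 1 := hij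
  have hvi : v i = 1 := by rw [hv, hA.apply]; exact hij
  have hvj : v j = 0 := hdiag j
  have hrowi : A' i = 0 := by
    ext b
    simp only [hA', Matrix.add_apply, vecMulVec_apply, ← hu, ← hv]
    rw [show u i = 0 from hui, show v i = 1 from hvi]
    ring_nf
    simp [CharTwo.two_eq_zero]
  have hrowj : A' j = 0 := by
    ext b
    have : A' j b = A j b + (u j * v b + v j * u b) := by
      simp [hA', vecMulVec_apply]
    rw [this, huj, hvj]
    ring_nf
    simp [CharTwo.two_eq_zero]
    exact CharTwo.add_self_eq_zero (A j b)
  have hle : cs A' ≤ cs A := by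
    rintro x ⟨y, rfl⟩
    have : A'.mulVecLin y = A *ᵥ y + ((v ⬝ᵥ y) • u + (u ⬝ᵥ y) • v) := by
      simp [hA', mulVecLin_apply, add_mulVec, vmv_mulVec]
    rw [this]
    exact Submodule.add_mem _ ⟨y, rfl⟩ (Submodule.add_mem _
      (Submodule.smul_mem _ _ (row_mem_cs A hA i)) (Submodule.smul_mem _ _ (row_mem_cs A hA j)))
  set Q := cs A' ⊔ Submodule.span (ZMod 2) {u} with hQ
  have hu_mem : u ∈ cs A := row_mem_cs A hA i
  have hv_mem : v ∈ cs A := row_mem_cs A hA j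
  have h1 : cs A' < Q := by
    refine lt_of_le_of_ne le_sup_left fun h => ?_
    have hmem : u ∈ cs A' := by
      rw [h]; exact Submodule.mem_sup_right (Submodule.mem_span_singleton_self u)
    have := coord_zero_of_mem hrowj hmem
    rw [huj] at this
    exact one_ne_zero this
  have h2 : Q < cs A := by
    refine lt_of_le_of_ne (sup_le hle (Submodule.span_le.2 (by simpa using hu_mem))) fun h => ?_
    have hvQ : v ∈ Q := h ▸ hv_mem
    rw [hQ, Submodule.mem_sup] at hvQ
    obtain ⟨p, hp, q, hq, hpq⟩ := hvQ
    obtain ⟨c, rfl⟩ := Submodule.mem_span_singleton.1 hq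
    have hpi : p i = 0 := coord_zero_of_mem hrowi hp
    have : v i = 0 := by
      rw [← hpq]
      simp [hpi, hui]
    rw [hvi] at this
    exact one_ne_zero this
  have f1 := Submodule.finrank_lt_finrank_of_lt h1
  have f2 := Submodule.finrank_lt_finrank_of_lt h2
  rw [rank_eq_cs, rank_eq_cs]
  omega


lemma vmv_transpose {m : ℕ} (u v : Fin m → ZMod 2) :
    (vecMulVec u v)ᵀ = vecMulVec v u := by
  ext a b
  simp [vecMulVec_apply, mul_comm]

lemma snoc_gram {r m : ℕ} (W : Matrix (Fin r) (Fin m) (ZMod 2)) (u : Fin m → ZMod 2) :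
    (Matrix.of (Fin.snoc W u))ᵀ * Matrix.of (Fin.snoc W u) = Wᵀ * W + vecMulVec u u := by
  ext a b
  simp [Matrix.mul_apply, Fin.sum_univ_castSucc, vecMulVec_apply]
  erw [Fin.snoc_last]
  congr 1
  refine Finset.sum_congr rfl fun i _ => ?_
  erw [Fin.snoc_castSucc]

/-- the char-2 hyperbolic trick : aᵀa + (a+v)ᵀ(a+v) = aᵀv + vᵀa + vᵀv -/
lemma vmv_hyper {m : ℕ} (a v : Fin m → ZMod 2) :
    vecMulVec a a + vecMulVec (a + v) (a + v)
      = vecMulVec a v + vecMulVec v a + vecMulVec v v := by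
  ext x y
  simp only [Matrix.add_apply, vecMulVec_apply, Pi.add_apply]
  generalize a x = p; generalize a y = q; generalize v x = s; generalize v y = t
  revert p q s t; decide


lemma ne_zero_iff_one (x : ZMod 2) : x ≠ 0 ↔ x = 1 := by revert x; decide

lemma eq_zero_of_rank_eq_zero {m : ℕ} {A : Matrix (Fin m) (Fin m) (ZMod 2)} (hA : A.IsSymm)
    (h : A.rank = 0) : A = 0 := by
  have hbot : cs A = ⊥ := by
    rw [rank_eq_cs] at h
    exact Submodule.finrank_eq_zero.mp h
  ext a b
  have := row_mem_cs A hA a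
  rw [hbot, Submodule.mem_bot] at this
  simpa using congrFun this b

lemma alt_factor : ∀ (n : ℕ) {m : ℕ} (A : Matrix (Fin m) (Fin m) (ZMod 2)), A.IsSymm →
    (∀ a, A a a = 0) → A.rank ≤ n →
    ∃ (r : ℕ) (W : Matrix (Fin r) (Fin m) (ZMod 2)) (s : Fin m → ZMod 2),
      Wᵀ * W = A + vecMulVec s s ∧ r ≤ A.rank := by
  intro n
  induction n with
  | zero =>
    intro m A hA hdiag hr
    have h0 : A = 0 := eq_zero_of_rank_eq_zero hA (Nat.le_zero.mp hr)
    subst h0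
    exact ⟨0, 0, 0, by ext a b; simp [Matrix.mul_apply, vecMulVec_apply], Nat.zero_le _⟩
  | succ n ih =>
    intro m A hA hdiag hr
    by_cases h0 : A = 0
    · subst h0
      exact ⟨0, 0, 0, by ext a b; simp [Matrix.mul_apply, vecMulVec_apply], Nat.zero_le _⟩
    · -- find a nonzero entry, necessarily off-diagonal
      have : ∃ i j, A i j ≠ 0 := by
        by_contra hc
        push_neg at hc
        exact h0 (by ext a b; simpa using hc a b)
      obtain ⟨i, j, hij0⟩ := this
      have hij : A i j = 1 := (ne_zero_iff_one _).1 hij0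
      set u := A i with hu
      set v := A j with hv
      set A' := A + (vecMulVec u v + vecMulVec v u) with hA'
      have hA'symm : A'.IsSymm := by
        refine hA.add ?_
        unfold Matrix.IsSymm
        rw [Matrix.transpose_add, vmv_transpose, vmv_transpose, add_comm]
      have hA'diag : ∀ a, A' a a = 0 := by
        intro a
        simp only [hA', Matrix.add_apply, vecMulVec_apply]
        rw [hdiag a, zero_add, mul_comm (v a) (u a), CharTwo.add_self_eq_zero]
      have hrank : A'.rank + 2 ≤ A.rank := rank_step2 A hA hdiag i j hij
      have hr' : A'.rank ≤ n := by omega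
      obtain ⟨r', W', s', hW', hr'le⟩ := ih A' hA'symm hA'diag hr'
      -- append rows (u + s') and (u + s' + v)
      refine ⟨r' + 1 + 1,
        Matrix.of (Fin.snoc (Matrix.of (Fin.snoc W' (u + s'))) (u + s' + v)), s' + v, ?_, ?_⟩
      · rw [snoc_gram, snoc_gram, hW', hA']
        ext x y
        simp only [Matrix.add_apply, vecMulVec_apply, Pi.add_apply]
        generalize A x y = a0
        generalize u x = p
        generalize u y = q
        generalize v x = c
        generalize v y = d
        generalize s' x = e
        generalize s' y = f
        revert a0 p q c d e f
        decide
      · omega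


lemma gen_factor : ∀ (n : ℕ) {m : ℕ} (A : Matrix (Fin m) (Fin m) (ZMod 2)), A.IsSymm →
    A.rank ≤ n →
    ∃ (r : ℕ) (W : Matrix (Fin r) (Fin m) (ZMod 2)), Wᵀ * W = A ∧ r ≤ A.rank + 1 := by
  intro n
  induction n with
  | zero =>
    intro m A hA hr
    have h0 : A = 0 := eq_zero_of_rank_eq_zero hA (Nat.le_zero.mp hr)
    subst h0
    exact ⟨0, 0, by ext a b; simp [Matrix.mul_apply], Nat.zero_le _⟩
  | succ n ih =>
    intro m A hA hr
    by_cases hdiag : ∀ a, A a a = 0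
    · obtain ⟨r, W, s, hW, hrle⟩ := alt_factor A.rank A hA hdiag le_rfl
      refine ⟨r + 1, Matrix.of (Fin.snoc W s), ?_, by omega⟩
      rw [snoc_gram, hW]
      ext x y
      simp only [Matrix.add_apply, vecMulVec_apply]
      rw [add_assoc, CharTwo.add_self_eq_zero, add_zero]
    · push_neg at hdiag
      obtain ⟨i, hi0⟩ := hdiag
      have hi : A i i = 1 := (ne_zero_iff_one _).1 hi0
      set u := A i with hu
      set A' := A + vecMulVec u u with hA'
      have hA'symm : A'.IsSymm := by
        refine hA.add ?_
        unfold Matrix.IsSymm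
        rw [vmv_transpose]
      have hrank : A'.rank < A.rank := rank_step1 A hA i hi
      have hr' : A'.rank ≤ n := by omega
      obtain ⟨r', W', hW', hr'le⟩ := ih A' hA'symm hr'
      refine ⟨r' + 1, Matrix.of (Fin.snoc W' u), ?_, by omega⟩
      rw [snoc_gram, hW', hA']
      ext x y
      simp only [Matrix.add_apply, vecMulVec_apply]
      rw [add_assoc, CharTwo.add_self_eq_zero, add_zero]


/-- "upper bit" of an element of `ZMod 4` -/
def eps (x : ZMod 4) : ZMod 2 := ((x.val / 2 : ℕ) : ZMod 2)

/-- the additive embedding `ZMod 2 →+ ZMod 4`, `x ↦ 2 * x` -/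
def phi : ZMod 2 →+ ZMod 4 :=
  AddMonoidHom.mk' (fun x => 2 * ((x.val : ℕ) : ZMod 4)) (by decide)

lemma entry_split (x : ZMod 4) (p q : ZMod 2) :
    ((p.val : ℕ) : ZMod 4) * x * ((q.val : ℕ) : ZMod 4)
      = ((p.val : ℕ) : ZMod 4)
          * ((((ZMod.castHom (show (2:ℕ) ∣ 4 by norm_num) (ZMod 2)) x).val : ℕ) : ZMod 4)
          * ((q.val : ℕ) : ZMod 4)
        + phi (p * eps x * q) := by
  revert x p q; decide

lemma sym_sum {m : ℕ} (f : Fin m → Fin m → ZMod 2) (hf : ∀ a b, f a b = f b a) :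
    ∑ a, ∑ b, f a b = ∑ a, f a a := by
  classical
  rw [← Finset.sum_product']
  rw [← Finset.diag_union_offDiag (Finset.univ : Finset (Fin m)),
    Finset.sum_union (Finset.disjoint_diag_offDiag _)]
  have h1 : ∑ p ∈ (Finset.univ : Finset (Fin m)).offDiag, f p.1 p.2 = 0 := by
    refine Finset.sum_involution (fun p _ => (p.2, p.1)) ?_ ?_ ?_ ?_
    · intro p hp
      rw [hf p.1 p.2]
      exact CharTwo.add_self_eq_zero _
    · intro p hp hne
      rw [Finset.mem_offDiag] at hp
      intro hcontra
      exact hp.2.2 (congrArg Prod.fst hcontra).symm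
    · intro p hp
      rw [Finset.mem_offDiag] at hp ⊢
      exact ⟨hp.2.1, hp.1, fun h => hp.2.2 h.symm⟩
    · intro p hp; rfl
  have h2 : ∑ p ∈ (Finset.univ : Finset (Fin m)).diag, f p.1 p.2 = ∑ a, f a a := by
    refine Finset.sum_bij (fun p _ => p.1) ?_ ?_ ?_ ?_
    · intro p hp; exact Finset.mem_univ _
    · intro p hp p' hp' h
      rw [Finset.mem_diag] at hp hp'
      have h' : p.1 = p'.1 := h
      ext
      · exact congrArg Fin.val h'
      · rw [← hp.2, ← hp'.2]; exact congrArg Fin.val h'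
    · intro a _
      exact ⟨(a, a), Finset.mem_diag.2 ⟨Finset.mem_univ _, rfl⟩, rfl⟩
    · intro p hp
      rw [Finset.mem_diag] at hp
      rw [← hp.2]
  rw [h1, h2, add_zero]


end Stmt16

/-- Any `Z_4`-valued quadratic form `q(z) = z M zᵀ` on `F_2^m` can be written as
`z (Wᵀ W) zᵀ + 2 · (z D zᵀ)` with `W` an `r × m` binary matrix, `D` diagonal binary,
and `r₀ ≤ r ≤ r₀ + 1` where `r₀` is the `F_2`-rank of `M mod 2`. -/
theorem stmt_16 (m : ℕ) (M : Matrix (Fin m) (Fin m) (ZMod 4)) (hM : M.IsSymm) :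
    ∃ (r : ℕ) (W : Matrix (Fin r) (Fin m) (ZMod 2)) (D : Fin m → ZMod 2),
      (M.map (ZMod.castHom (show (2:ℕ) ∣ 4 by norm_num) (ZMod 2))).rank ≤ r ∧
      r ≤ (M.map (ZMod.castHom (show (2:ℕ) ∣ 4 by norm_num) (ZMod 2))).rank + 1 ∧
      ∀ z : Fin m → ZMod 2,
        ∑ a, ∑ b, ((z a).val : ZMod 4) * M a b * ((z b).val : ZMod 4)
          = (∑ a, ∑ b, ((z a).val : ZMod 4) * (((Wᵀ * W) a b).val : ZMod 4)
              * ((z b).val : ZMod 4))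
            + 2 * ((∑ a, z a * D a * z a).val : ZMod 4) := by
  have c := ZMod.castHom (show (2:ℕ) ∣ 4 by norm_num) (ZMod 2)
  set A := M.map (ZMod.castHom (show (2:ℕ) ∣ 4 by norm_num) (ZMod 2)) with hA
  have hAsymm : A.IsSymm := hM.map _
  obtain ⟨r, W, hW, hrle⟩ := Stmt16.gen_factor A.rank A hAsymm le_rfl
  refine ⟨r, W, fun a => Stmt16.eps (M a a), ?_, hrle, ?_⟩
  · calc A.rank = (Wᵀ * W).rank := by rw [hW]
      _ ≤ (Wᵀ).rank := Matrix.rank_mul_le_left _ _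
      _ ≤ Fintype.card (Fin r) := Matrix.rank_le_card_width _
      _ = r := Fintype.card_fin r
  · intro z
    have hN : ∀ a b, (Wᵀ * W) a b
        = (ZMod.castHom (show (2:ℕ) ∣ 4 by norm_num) (ZMod 2)) (M a b) := by
      intro a b; rw [hW]; rfl
    calc ∑ a, ∑ b, ((z a).val : ZMod 4) * M a b * ((z b).val : ZMod 4)
        = ∑ a, ∑ b, (((z a).val : ZMod 4) * (((Wᵀ * W) a b).val : ZMod 4) * ((z b).val : ZMod 4)
            + Stmt16.phi (z a * Stmt16.eps (M a b) * z b)) := by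
          refine Finset.sum_congr rfl fun a _ => Finset.sum_congr rfl fun b _ => ?_
          rw [hN a b]
          exact Stmt16.entry_split (M a b) (z a) (z b)
      _ = (∑ a, ∑ b, ((z a).val : ZMod 4) * (((Wᵀ * W) a b).val : ZMod 4) * ((z b).val : ZMod 4))
            + ∑ a, ∑ b, Stmt16.phi (z a * Stmt16.eps (M a b) * z b) := by
          rw [← Finset.sum_add_distrib]
          exact Finset.sum_congr rfl fun a _ => by rw [← Finset.sum_add_distrib]
      _ = (∑ a, ∑ b, ((z a).val : ZMod 4) * (((Wᵀ * W) a b).val : ZMod 4) * ((z b).val : ZMod 4))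
            + Stmt16.phi (∑ a, ∑ b, z a * Stmt16.eps (M a b) * z b) := by
          congr 1
          rw [map_sum]
          exact Finset.sum_congr rfl fun a _ => (map_sum _ _ _).symm
      _ = (∑ a, ∑ b, ((z a).val : ZMod 4) * (((Wᵀ * W) a b).val : ZMod 4) * ((z b).val : ZMod 4))
            + Stmt16.phi (∑ a, z a * Stmt16.eps (M a a) * z a) := by
          congr 1
          refine congrArg _ (Stmt16.sym_sum _ ?_)
          intro a b
          rw [hM.apply a b]
          ring
      _ = _ := rfl
end

section
/- Let G be a triorthogonal matrix with odd-weight rows G_1 (k rows g_1,...,g_k on n columns) and even-weight rows G_0. If n + k is even, then the vector v = 1_n + g_1 + ... + g_k has even Hamming weight, and adjoining v as a new row to G_0 preserves triorthogonality of the whole matrix. -/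
lemma zmod2_sq : ∀ x : ZMod 2, x * x = x := by decide

lemma sum_eq_card_zmod2 {n : ℕ} (w : Fin n → ZMod 2) :
    ∑ c, w c = ((Finset.univ.filter fun c => w c ≠ 0).card : ZMod 2) := by
  rw [← Finset.sum_filter_ne_zero]
  have h : ∀ c ∈ Finset.univ.filter fun c => w c ≠ 0, w c = 1 := by
    intro c hc
    simp only [Finset.mem_filter] at hc
    have h2 := hc.2
    revert h2; generalize w c = x; revert x; decide
  rw [Finset.sum_congr rfl h, Finset.sum_const, nsmul_eq_mul, mul_one]

lemma even_iff_zmod2 (m : ℕ) : Even m ↔ (m : ZMod 2) = 0 := by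
  rw [ZMod.natCast_eq_zero_iff]
  exact even_iff_two_dvd

/-- Let `G` be a triorthogonal matrix with odd-weight rows `G1` (`k` rows on `n`
columns) and even-weight rows `G0`.  If `n + k` is even, then
`v = 1_n + g_1 + ⋯ + g_k` has even Hamming weight, and adjoining `v` as a new row
preserves triorthogonality of the whole matrix. -/
theorem stmt_18 (n k g : ℕ) (G1 : Fin k → Fin n → ZMod 2) (G0 : Fin g → Fin n → ZMod 2)
    (hodd : ∀ a, Odd (Finset.univ.filter fun j => G1 a j ≠ 0).card)
    (heven : ∀ b, Even (Finset.univ.filter fun j => G0 b j ≠ 0).card)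
    (horth : ∀ i j : Fin k ⊕ Fin g, i ≠ j →
      ∑ c, Sum.elim G1 G0 i c * Sum.elim G1 G0 j c = 0)
    (htri : ∀ i j l : Fin k ⊕ Fin g, i ≠ j → j ≠ l → i ≠ l →
      ∑ c, Sum.elim G1 G0 i c * Sum.elim G1 G0 j c * Sum.elim G1 G0 l c = 0)
    (hnk : Even (n + k))
    (v : Fin n → ZMod 2) (hv : v = fun c => 1 + ∑ a, G1 a c) :
    Even (Finset.univ.filter fun c => v c ≠ 0).card ∧
    (∀ i : Fin k ⊕ Fin g, ∑ c, v c * Sum.elim G1 G0 i c = 0) ∧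
    (∀ i j : Fin k ⊕ Fin g, i ≠ j →
      ∑ c, v c * Sum.elim G1 G0 i c * Sum.elim G1 G0 j c = 0) ∧
    (∀ i : Fin k ⊕ Fin g, ∑ c, v c * v c * Sum.elim G1 G0 i c = 0) := by
  subst hv
  -- row sums
  have h1 : ∀ a, ∑ c, G1 a c = 1 := by
    intro a
    rw [sum_eq_card_zmod2]
    obtain ⟨t, ht⟩ := hodd a
    rw [ht]; push_cast
    rw [show (2 : ZMod 2) = 0 from rfl]; ring
  have h0 : ∀ b, ∑ c, G0 b c = 0 := by
    intro b
    rw [sum_eq_card_zmod2]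
    exact (even_iff_zmod2 _).mp (heven b)
  -- part 2
  have part2 : ∀ i : Fin k ⊕ Fin g,
      ∑ c, (1 + ∑ a, G1 a c) * Sum.elim G1 G0 i c = 0 := by
    intro i
    have expand : ∑ c, (1 + ∑ a, G1 a c) * Sum.elim G1 G0 i c
        = (∑ c, Sum.elim G1 G0 i c) + ∑ a, ∑ c, G1 a c * Sum.elim G1 G0 i c := by
      simp_rw [add_mul, one_mul, Finset.sum_add_distrib, Finset.sum_mul]
      rw [Finset.sum_comm]
    rw [expand]
    cases i with
    | inl b =>
        have hfirst : ∑ c, Sum.elim G1 G0 (Sum.inl b) c = 1 := h1 b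
        have hsec : ∑ a, ∑ c, G1 a c * Sum.elim G1 G0 (Sum.inl b) c = 1 := by
          rw [Finset.sum_eq_single b]
          · simp only [Sum.elim_inl]
            simp_rw [zmod2_sq]
            exact h1 b
          · intro a _ hab
            exact horth (Sum.inl a) (Sum.inl b) (by simp [hab])
          · simp
        rw [hfirst, hsec]; decide
    | inr b =>
        have hfirst : ∑ c, Sum.elim G1 G0 (Sum.inr b) c = 0 := h0 b
        have hsec : ∑ a, ∑ c, G1 a c * Sum.elim G1 G0 (Sum.inr b) c = 0 := by
          apply Finset.sum_eq_zero
          intro a _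
          exact horth (Sum.inl a) (Sum.inr b) (by simp)
        rw [hfirst, hsec]; decide
  refine ⟨?_, part2, ?_, ?_⟩
  · -- weight
    rw [even_iff_zmod2, ← sum_eq_card_zmod2]
    have : ∑ c : Fin n, (1 + ∑ a, G1 a c) = (n : ZMod 2) + (k : ZMod 2) := by
      rw [Finset.sum_add_distrib, Finset.sum_const, Finset.card_univ, Fintype.card_fin,
        Finset.sum_comm]
      simp_rw [h1]
      rw [Finset.sum_const, Finset.card_univ, Fintype.card_fin]
      simp [nsmul_eq_mul]
    rw [this, ← Nat.cast_add, ← even_iff_zmod2]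
    exact hnk
  · -- triorthogonality
    intro i j hij
    have expand : ∑ c, (1 + ∑ a, G1 a c) * Sum.elim G1 G0 i c * Sum.elim G1 G0 j c
        = (∑ c, Sum.elim G1 G0 i c * Sum.elim G1 G0 j c)
          + ∑ a, ∑ c, G1 a c * Sum.elim G1 G0 i c * Sum.elim G1 G0 j c := by
      simp_rw [add_mul, one_mul, Finset.sum_add_distrib, Finset.sum_mul]
      rw [Finset.sum_comm]
    rw [expand, horth i j hij, zero_add]
    apply Finset.sum_eq_zero
    intro a _
    by_cases hai : Sum.inl a = i
    · subst hai
      simp only [Sum.elim_inl]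
      simp_rw [show ∀ c, G1 a c * G1 a c * Sum.elim G1 G0 j c
          = Sum.elim G1 G0 (Sum.inl a) c * Sum.elim G1 G0 j c from
        fun c => by rw [zmod2_sq]; rfl]
      exact horth (Sum.inl a) j hij
    · by_cases haj : Sum.inl a = j
      · subst haj
        simp_rw [show ∀ c, G1 a c * Sum.elim G1 G0 i c * Sum.elim G1 G0 (Sum.inl a) c
            = Sum.elim G1 G0 i c * Sum.elim G1 G0 (Sum.inl a) c from
          fun c => by simp only [Sum.elim_inl]; rw [mul_right_comm, zmod2_sq, mul_comm]]
        exact horth i (Sum.inl a) hij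
      · exact htri (Sum.inl a) i j hai (by exact hij) haj
  · -- v*v
    intro i
    simp_rw [zmod2_sq]
    exact part2 i
end

section
/- Let H ⊆ F_2^c be a triorthogonal subspace. If there exists t ∈ Z_8^c with all entries odd such that h · t = 0 mod 8 for every h ∈ H (level-3 divisibility), then for every h, h' ∈ H the componentwise product satisfies (h ∧ h') · t = 0 mod 4. -/
/-- If a triorthogonal subspace `H ⊆ F_2^c` is divisible at level 3, witnessed by an
integral vector `t` with all odd entries such that `h · t ≡ 0 (mod 8)` for every
`h ∈ H`, then for all `h, h' ∈ H` the componentwise product satisfies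
`(h ∧ h') · t ≡ 0 (mod 4)`. -/
theorem stmt_19 (c : ℕ) (H : Submodule (ZMod 2) (Fin c → ZMod 2))
    (htri : ∀ u ∈ H, ∀ v ∈ H, ∀ w ∈ H, ∑ i, u i * v i * w i = 0)
    (t : Fin c → ℤ) (htodd : ∀ i, Odd (t i))
    (hdiv : ∀ h ∈ H, (∑ i, ((h i).val : ℤ) * t i) % 8 = 0) :
    ∀ h ∈ H, ∀ h' ∈ H,
      (∑ i, ((h i).val : ℤ) * ((h' i).val : ℤ) * t i) % 4 = 0 := by
  intro h hh h' hh'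
  have h1 := hdiv h hh
  have h2 := hdiv h' hh'
  have h3 := hdiv (h + h') (H.add_mem hh hh')
  have key : ∀ i, (((h + h') i).val : ℤ) * t i
      = (h i).val * t i + (h' i).val * t i
        - 2 * ((h i).val * (h' i).val * t i) := by
    intro i
    have hab : ∀ a b : ZMod 2, ((a + b).val : ℤ)
        = (a.val : ℤ) + b.val - 2 * ((a.val : ℤ) * b.val) := by decide
    simp only [Pi.add_apply, hab (h i) (h' i)]
    ring
  rw [Finset.sum_congr rfl fun i _ => key i] at h3
  rw [Finset.sum_sub_distrib, Finset.sum_add_distrib, ← Finset.mul_sum] at h3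
  omega
end
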